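/- Let k ≥ 1 be an integer and let G be a finite bipartite graph with bipartition (U, W) such that |U| = |W|. Then G contains a perfect matching if and only if G contains a perfect k-matching. -/

import Mathlib

open Classical in
/-- Sum over the incidence set as a sum over neighbors. -/
lemma sum_incidenceSet {V : Type*} [Fintype V] (G : SimpleGraph V) (f : Sym2 V → ℕ) (v : V) :
    ∑ᶠ e ∈ G.incidenceSet v, f e = ∑ w ∈ (G.neighborSet v).toFinset, f s(v, w) := by
  have himg : G.incidenceSet v = (fun w => s(v, w)) '' G.neighborSet v := by
    ext e
    induction e using Sym2.ind with
    | _ a b =>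
      simp only [Set.mem_image, SimpleGraph.mem_neighborSet]
      constructor
      · intro he
        rcases he with ⟨hadj, hv⟩
        rw [SimpleGraph.mem_edgeSet] at hadj
        rcases Sym2.mem_iff.mp hv with h | h
        · exact ⟨b, by subst h; exact hadj, by subst h; rfl⟩
        · exact ⟨a, by subst h; exact hadj.symm, by subst h; rw [Sym2.eq_swap]⟩
      · rintro ⟨w, hw, he⟩
        rw [← he]
        exact (G.mem_incidenceSet v w).mpr hw
  rw [himg, finsum_mem_image (fun x _ y _ h => Sym2.congr_right.mp h),
    ← finsum_mem_coe_finset, Set.coe_toFinset]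

/-- A perfect `k`-matching of a simple graph `G` is an assignment `f` of weights in
`{0, 1, ..., k}` to the edges of `G` (non-edges get weight `0`) such that for every vertex `v`,
the sum of the weights of the edges incident with `v` equals `k`. -/
def SimpleGraph.IsPerfectNMatching {V : Type*} (G : SimpleGraph V) (k : ℕ)
    (f : Sym2 V → ℕ) : Prop :=
  (∀ e, f e ≠ 0 → e ∈ G.edgeSet) ∧ (∀ e, f e ≤ k) ∧
    ∀ v : V, ∑ᶠ e ∈ G.incidenceSet v, f e = k

/-- Let `k ≥ 1` be an integer and let `G` be a finite bipartite graph with bipartition `(U, W)`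
such that `|U| = |W|`. Then `G` contains a perfect matching if and only if `G` contains a
perfect `k`-matching. -/
theorem bipartite_perfect_matching_iff_perfect_k_matching {V : Type*} [Fintype V]
    (G : SimpleGraph V) (k : ℕ) (hk : 1 ≤ k) (U W : Set V)
    (hdisj : Disjoint U W) (hcover : U ∪ W = Set.univ)
    (hbip : ∀ a b, G.Adj a b → (a ∈ U ∧ b ∈ W) ∨ (a ∈ W ∧ b ∈ U))
    (hcard : U.ncard = W.ncard) :
    (∃ M : G.Subgraph, M.IsPerfectMatching) ↔ (∃ f, G.IsPerfectNMatching k f) := by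
  classical
  constructor
  · -- forward: perfect matching gives perfect k-matching
    rintro ⟨M, hM⟩
    rw [SimpleGraph.Subgraph.isPerfectMatching_iff] at hM
    refine ⟨fun e => if e ∈ M.edgeSet then k else 0, ?_, ?_, ?_⟩
    · intro e he
      by_cases h : e ∈ M.edgeSet
      · exact M.edgeSet_subset h
      · simp [h] at he
    · intro e; by_cases h : e ∈ M.edgeSet <;> simp [h]
    · intro v
      obtain ⟨w, hw, huniq⟩ := hM v
      rw [sum_incidenceSet]
      rw [Finset.sum_eq_single w]
      · simp [SimpleGraph.Subgraph.mem_edgeSet, hw]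
      · intro b hb hne
        have : ¬ M.Adj v b := fun h => hne (huniq b h)
        simp [SimpleGraph.Subgraph.mem_edgeSet, this]
      · intro hw'
        simp only [Set.mem_toFinset, SimpleGraph.mem_neighborSet] at hw'
        exact absurd (M.adj_sub hw) hw'
  · -- backward: perfect k-matching gives perfect matching via Hall
    rintro ⟨f, hf0, _hfle, hfsum⟩
    have hfsum' : ∀ v : V, ∑ w ∈ (G.neighborSet v).toFinset, f s(v, w) = k := by
      intro v; rw [← sum_incidenceSet]; exact hfsum v
    -- Hall condition for U
    have hall : ∀ s : Finset ↥U, s.card ≤ (s.biUnion fun u => (G.neighborSet ↑u).toFinset).card := by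
      intro s
      set T := s.biUnion fun u => (G.neighborSet (↑u : V)).toFinset with hT
      have key : k * s.card ≤ k * T.card := by
        calc k * s.card = ∑ u ∈ s, k := by rw [Finset.sum_const, smul_eq_mul, mul_comm]
        _ = ∑ u ∈ s, ∑ w ∈ (G.neighborSet ↑u).toFinset, f s(↑u, w) := by
              refine Finset.sum_congr rfl fun u _ => (hfsum' ↑u).symm
        _ = ∑ u ∈ s, ∑ w ∈ T, if w ∈ (G.neighborSet (↑u : V)).toFinset then f s(↑u, w) else 0 := by
              refine Finset.sum_congr rfl fun u hu => ?_
              rw [Finset.sum_ite_mem,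
                (Finset.inter_eq_right).mpr (Finset.subset_biUnion_of_mem _ hu)]
        _ = ∑ w ∈ T, ∑ u ∈ s, if w ∈ (G.neighborSet (↑u : V)).toFinset then f s(↑u, w) else 0 :=
              Finset.sum_comm
        _ ≤ ∑ w ∈ T, k := by
              refine Finset.sum_le_sum fun w _ => ?_
              calc ∑ u ∈ s, (if w ∈ (G.neighborSet (↑u : V)).toFinset then f s(↑u, w) else 0)
                  = ∑ u ∈ s.image (Subtype.val), (if w ∈ (G.neighborSet u).toFinset then f s(u, w) else 0) := by
                    rw [Finset.sum_image (fun a _ b _ h => Subtype.ext h)]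
                _ = ∑ u ∈ (s.image Subtype.val).filter (fun u => u ∈ (G.neighborSet u |> fun _ => (G.neighborSet w).toFinset)), f s(u, w) := by
                    rw [Finset.sum_filter]
                    refine Finset.sum_congr rfl fun u _ => ?_
                    congr 1
                    simp [SimpleGraph.adj_comm]
                _ ≤ ∑ u ∈ (G.neighborSet w).toFinset, f s(u, w) := by
                    refine Finset.sum_le_sum_of_subset ?_
                    intro u hu
                    exact (Finset.mem_filter.mp hu).2
                _ = ∑ u ∈ (G.neighborSet w).toFinset, f s(w, u) := by
                    refine Finset.sum_congr rfl fun u _ => by rw [Sym2.eq_swap]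
                _ = k := hfsum' w
        _ = k * T.card := by rw [Finset.sum_const, smul_eq_mul, mul_comm]
      exact Nat.le_of_mul_le_mul_left key hk
    obtain ⟨m, hminj, hmmem⟩ :=
      (Finset.all_card_le_biUnion_card_iff_exists_injective
        (fun u : ↥U => (G.neighborSet (↑u : V)).toFinset)).mp hall
    have hmadj : ∀ u : ↥U, G.Adj ↑u (m u) := by
      intro u; have := hmmem u; simpa using this
    have hmW : ∀ u : ↥U, m u ∈ W := by
      intro u
      rcases hbip _ _ (hmadj u) with ⟨_, h⟩ | ⟨h, _⟩
      · exact h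
      · exact absurd u.2 (fun hu => (Set.disjoint_left.mp hdisj hu) h)
    -- m as a bijection U → W
    let m' : ↥U → ↥W := fun u => ⟨m u, hmW u⟩
    have hm'inj : Function.Injective m' := fun a b h => hminj (congrArg Subtype.val h)
    have hcardUW : Fintype.card ↥U = Fintype.card ↥W := by
      rwa [Set.ncard_eq_toFinset_card', Set.ncard_eq_toFinset_card',
        Set.toFinset_card, Set.toFinset_card] at hcard
    have hm'bij : Function.Bijective m' :=
      (Fintype.bijective_iff_injective_and_card m').mpr ⟨hm'inj, hcardUW⟩
    -- build the subgraph
    refine ⟨{ verts := Set.univ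
              Adj := fun a b => (∃ u : ↥U, a = ↑u ∧ b = m u) ∨ (∃ u : ↥U, b = ↑u ∧ a = m u)
              adj_sub := ?_
              edge_vert := fun _ => Set.mem_univ _
              symm := ⟨fun a b h => Or.symm h⟩ }, ?_⟩
    · rintro a b (⟨u, rfl, rfl⟩ | ⟨u, rfl, rfl⟩)
      · exact hmadj u
      · exact (hmadj u).symm
    · rw [SimpleGraph.Subgraph.isPerfectMatching_iff]
      intro v
      have hvU_or : v ∈ U ∨ v ∈ W := by
        have : v ∈ U ∪ W := hcover ▸ Set.mem_univ v
        exact this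
      have hUW : ∀ x, x ∈ U → x ∈ W → False := fun x h1 h2 => Set.disjoint_left.mp hdisj h1 h2
      rcases hvU_or with hv | hv
      · refine ⟨m ⟨v, hv⟩, Or.inl ⟨⟨v, hv⟩, rfl, rfl⟩, ?_⟩
        rintro w (⟨u, hu1, rfl⟩ | ⟨u, rfl, hv2⟩)
        · have : u = ⟨v, hv⟩ := Subtype.ext hu1.symm
          rw [this]
        · exact absurd (hmW u) (fun h => hUW v hv (hv2 ▸ h))
      · obtain ⟨u₀, hu₀⟩ := hm'bij.surjective ⟨v, hv⟩
        have hu₀' : m u₀ = v := congrArg Subtype.val hu₀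
        refine ⟨↑u₀, Or.inr ⟨u₀, rfl, hu₀'.symm⟩, ?_⟩
        rintro w (⟨u, hu1, rfl⟩ | ⟨u, rfl, hv2⟩)
        · exact absurd hv (fun h => hUW v (hu1 ▸ u.2) h)
        · have : m' u = ⟨v, hv⟩ := Subtype.ext hv2.symm
          have := hm'inj (this.trans hu₀.symm)
          rw [this]
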